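/- Monotonicity of abstention in agreement: with K ~ Binomial(n, p) and fixed threshold t > n/2, the abstention probability P(n − t < K < t) is nonincreasing in p for p ∈ [1/2, 1]. -/

import Mathlib

open Finset Set

private lemma hasDerivAt_term (n k : ℕ) (hk : 0 < k) (hkn : k < n) (p : ℝ) :
    HasDerivAt (fun x : ℝ => (n.choose k : ℝ) * x^k * (1-x)^(n-k))
      (((n * (n-1).choose (k-1) : ℕ) : ℝ) * p^(k-1) * (1-p)^(n-1-(k-1))
        - ((n * (n-1).choose k : ℕ) : ℝ) * p^k * (1-p)^(n-1-k)) p := by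
  have h1 : HasDerivAt (fun x : ℝ => x^k) ((k : ℝ) * p^(k-1)) p := hasDerivAt_pow k p
  have hlin : HasDerivAt (fun x : ℝ => 1 - x) (-1) p := (hasDerivAt_id p).const_sub 1
  have h2 : HasDerivAt (fun x : ℝ => (1-x)^(n-k))
      (((n-k : ℕ) : ℝ) * (1-p)^(n-k-1) * (-1)) p := hlin.pow (n-k)
  have h3 := (h1.const_mul ((n.choose k : ℝ))).mul h2
  refine h3.congr_deriv ?_
  have e1 : n * (n-1).choose (k-1) = n.choose k * k := by
    obtain ⟨m, rfl⟩ : ∃ m, n = m + 1 := ⟨n - 1, by omega⟩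
    obtain ⟨j, rfl⟩ : ∃ j, k = j + 1 := ⟨k - 1, by omega⟩
    have := Nat.add_one_mul_choose_eq m j
    simpa using this
  have e2 : n * (n-1).choose k = n.choose k * (n - k) := by
    obtain ⟨m, rfl⟩ : ∃ m, n = m + 1 := ⟨n - 1, by omega⟩
    have hkm : k ≤ m := by omega
    have h := Nat.add_one_mul_choose_eq m (m - k)
    have h2 : m.choose (m - k) = m.choose k := Nat.choose_symm hkm
    have h3 : (m+1).choose (m - k + 1) = (m+1).choose k := by
      rw [← Nat.choose_symm (by omega : m - k + 1 ≤ m + 1), (by omega : m + 1 - (m - k + 1) = k)]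
    rw [h2, h3] at h
    rw [(by omega : m + 1 - k = m - k + 1)]
    simp only [Nat.add_sub_cancel]
    omega
  rw [e1, e2, (by omega : n-1-(k-1) = n-k), (by omega : n-1-k = n-k-1)]
  push_cast
  ring

private lemma tele (f : ℕ → ℝ) (a b : ℕ) (hab : a ≤ b) :
    ∑ k ∈ Ioo a (b+1), (f (k-1) - f k) = f a - f b := by
  rw [← Finset.Ico_add_one_left_eq_Ioo, Finset.sum_Ico_eq_sum_range]
  have : ∀ i, f (a + 1 + i - 1) - f (a + 1 + i) = f (a + i) - f (a + (i+1)) := by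
    intro i; congr 2 <;> omega
  rw [Finset.sum_congr rfl (fun i _ => this i)]
  rw [Finset.sum_range_sub' (fun i => f (a + i))]
  congr 2 <;> omega

theorem stmt_11 (n t : ℕ) (hn : 0 < n) (ht : n < 2 * t) (htn : t ≤ n)
    (p q : ℝ) (hp : 1/2 ≤ p) (hpq : p ≤ q) (hq : q ≤ 1) :
    ∑ k ∈ Ioo (n - t) t, (n.choose k : ℝ) * q^k * (1-q)^(n-k) ≤
      ∑ k ∈ Ioo (n - t) t, (n.choose k : ℝ) * p^k * (1-p)^(n-k) := by
  set F : ℝ → ℝ := fun x => ∑ k ∈ Ioo (n - t) t, (n.choose k : ℝ) * x^k * (1-x)^(n-k) with hF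
  set A : ℕ → ℝ → ℝ := fun j x => ((n * (n-1).choose j : ℕ) : ℝ) * x^j * (1-x)^(n-1-j) with hA
  have hderiv : ∀ x : ℝ, HasDerivAt F (A (n-t) x - A (t-1) x) x := by
    intro x
    have hsum : HasDerivAt F (∑ k ∈ Ioo (n - t) t, (A (k-1) x - A k x)) x := by
      apply HasDerivAt.fun_sum
      intro k hk
      simp only [Finset.mem_Ioo] at hk
      exact hasDerivAt_term n k (by omega) (by omega) x
    have ht1 : t - 1 + 1 = t := by omega
    have h := tele (fun j => A j x) (n-t) (t-1) (by omega)
    rw [ht1] at h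
    rwa [h] at hsum
  have hcont : Continuous F := by
    rw [continuous_iff_continuousAt]
    exact fun x => (hderiv x).continuousAt
  have hanti : AntitoneOn F (Icc (1/2 : ℝ) 1) := by
    apply antitoneOn_of_deriv_nonpos (convex_Icc _ _) hcont.continuousOn
    · intro x hx
      exact (hderiv x).differentiableAt.differentiableWithinAt
    · intro x hx
      rw [interior_Icc, Set.mem_Ioo] at hx
      rw [(hderiv x).deriv]
      have hx0 : (0:ℝ) ≤ 1 - x := by linarith
      have hx1 : 1 - x ≤ x := by linarith
      have hch : (n-1).choose (n-t) = (n-1).choose (t-1) := by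
        rw [← Nat.choose_symm (by omega : n - t ≤ n - 1), (by omega : n-1-(n-t) = t-1)]
      have he1 : n - 1 - (n - t) = t - 1 := by omega
      have he2 : n - 1 - (t - 1) = n - t := by omega
      have key : x^(n-t) * (1-x)^(t-1) ≤ x^(t-1) * (1-x)^(n-t) := by
        have hd : t - 1 = (n - t) + (t - 1 - (n - t)) := by omega
        rw [hd, pow_add, pow_add]
        have : (1-x)^(t-1-(n-t)) ≤ x^(t-1-(n-t)) := pow_le_pow_left₀ hx0 hx1 _
        have hxp : (0:ℝ) ≤ x := by linarith
        have h1 : (0:ℝ) ≤ x^(n-t) * (1-x)^(n-t) := by positivity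
        calc x^(n-t) * ((1-x)^(n-t) * (1-x)^(t-1-(n-t)))
            = (x^(n-t) * (1-x)^(n-t)) * (1-x)^(t-1-(n-t)) := by ring
          _ ≤ (x^(n-t) * (1-x)^(n-t)) * x^(t-1-(n-t)) := by
              exact mul_le_mul_of_nonneg_left this h1
          _ = x^(n-t) * x^(t-1-(n-t)) * (1-x)^(n-t) := by ring
      simp only [hA, hch, he1, he2]
      have hc0 : (0:ℝ) ≤ ((n * (n-1).choose (t-1) : ℕ) : ℝ) := by positivity
      nlinarith [mul_le_mul_of_nonneg_left key hc0]
  have hpmem : p ∈ Icc (1/2 : ℝ) 1 := ⟨hp, le_trans hpq hq⟩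
  have hqmem : q ∈ Icc (1/2 : ℝ) 1 := ⟨le_trans hp hpq, hq⟩
  exact hanti hpmem hqmem hpq
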